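/- If an envy-free and Pareto-optimal fractional perfect matching exists, then there exists one that is a vertex of the envy-free polytope P_EF; in particular, with rational utilities there always exists a rational envy-free Pareto-optimal allocation. -/

import Mathlib

section Cone
variable {κ ι : Type*} [Fintype κ] [Fintype ι]

/-- The cone generated by a finite family of vectors. -/
def coneGen (g : κ → ι → ℝ) : Set (ι → ℝ) :=
  {x | ∃ c : κ → ℝ, (∀ k, 0 ≤ c k) ∧ x = ∑ k, c k • g k}

/-- Cone combinations supported on a finite index set. -/
def coneGenOn (g : κ → ι → ℝ) (S : Finset κ) : Set (ι → ℝ) :=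
  {x | ∃ c : κ → ℝ, (∀ k, 0 ≤ c k) ∧ x = ∑ k ∈ S, c k • g k}

lemma coneGenOn_subset_coneGen {g : κ → ι → ℝ} {S : Finset κ} :
    coneGenOn g S ⊆ coneGen g := by
  classical
  rintro x ⟨c, hc, rfl⟩
  refine ⟨fun k => if k ∈ S then c k else 0, fun k => by dsimp only; split <;> simp [hc], ?_⟩
  rw [← Finset.sum_subset (Finset.subset_univ S) (by intro k _ hk; simp [hk])]
  exact Finset.sum_congr rfl fun k hk => by simp [hk]

lemma zero_mem_coneGen (g : κ → ι → ℝ) : (0 : ι → ℝ) ∈ coneGen g :=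
  ⟨0, by simp, by simp⟩

lemma mem_coneGen (g : κ → ι → ℝ) (k : κ) : g k ∈ coneGen g := by
  classical
  refine ⟨fun k' => if k' = k then 1 else 0, fun k' => by dsimp only; split <;> norm_num, ?_⟩
  rw [Finset.sum_eq_single k (by intro b _ hb; simp [hb]) (by simp)]
  simp

lemma coneGen_smul {g : κ → ι → ℝ} {x : ι → ℝ} {t : ℝ} (ht : 0 ≤ t)
    (hx : x ∈ coneGen g) : t • x ∈ coneGen g := by
  obtain ⟨c, hc, rfl⟩ := hx
  exact ⟨fun k => t * c k, fun k => mul_nonneg ht (hc k), by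
    rw [Finset.smul_sum]; exact Finset.sum_congr rfl fun k _ => by dsimp only; rw [smul_smul]⟩

lemma coneGen_convex (g : κ → ι → ℝ) : Convex ℝ (coneGen g) := by
  rintro x ⟨c, hc, rfl⟩ y ⟨c', hc', rfl⟩ a b ha hb hab
  refine ⟨fun k => a * c k + b * c' k,
    fun k => add_nonneg (mul_nonneg ha (hc k)) (mul_nonneg hb (hc' k)), ?_⟩
  rw [Finset.smul_sum, Finset.smul_sum, ← Finset.sum_add_distrib]
  exact Finset.sum_congr rfl fun k _ => by
    rw [add_smul, smul_smul, smul_smul]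

lemma coneGen_reduce (g : κ → ι → ℝ) (T : Finset κ) :
    ∀ c : κ → ℝ, (∀ k, 0 ≤ c k) →
    ∃ S : Finset κ, LinearIndependent ℝ (fun k : S => g k) ∧
      (∑ k ∈ T, c k • g k) ∈ coneGenOn g S := by
  classical
  induction T using Finset.strongInductionOn with
  | _ T ih =>
    intro c hc
    by_cases hsupp : ∀ k ∈ T, c k ≠ 0
    · by_cases hind : LinearIndependent ℝ (fun k : T => g k)
      · exact ⟨T, hind, c, hc, rfl⟩
      · obtain ⟨gc, hgc, i₀, hi₀⟩ := Fintype.not_linearIndependent_iff.1 hind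
        set d : κ → ℝ := fun k => if h : k ∈ T then gc ⟨k, h⟩ else 0 with hd
        have hdsum : ∑ k ∈ T, d k • g k = 0 := by
          rw [← hgc, ← Finset.sum_coe_sort T (fun k => d k • g k)]
          exact Finset.sum_congr rfl fun k _ => by simp [hd, k.2]
        have hdex : ∃ k ∈ T, d k ≠ 0 := ⟨i₀, i₀.2, by simpa [hd, i₀.2] using hi₀⟩
        -- WLOG there is a positive coefficient
        obtain ⟨e, hesum, k₁, hk₁T, hk₁⟩ :
            ∃ e : κ → ℝ, (∑ k ∈ T, e k • g k = 0) ∧ ∃ k ∈ T, 0 < e k := by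
          obtain ⟨k, hkT, hk⟩ := hdex
          rcases hk.lt_or_gt with h | h
          · refine ⟨-d, ?_, k, hkT, by simpa using neg_pos.2 h⟩
            have : ∀ k ∈ T, (-d) k • g k = -(d k • g k) := fun k _ => by simp [neg_smul]
            rw [Finset.sum_congr rfl this, Finset.sum_neg_distrib, hdsum, neg_zero]
          · exact ⟨d, hdsum, k, hkT, h⟩
        set Tpos := T.filter (fun k => 0 < e k) with hTpos
        obtain ⟨k₀, hk₀mem, hk₀min⟩ :=
          Finset.exists_min_image Tpos (fun k => c k / e k) ⟨k₁, by simp [hTpos, hk₁T, hk₁]⟩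
        have hk₀T : k₀ ∈ T := (Finset.mem_filter.1 hk₀mem).1
        have hk₀pos : 0 < e k₀ := (Finset.mem_filter.1 hk₀mem).2
        have hck₀ : 0 < c k₀ := (hc k₀).lt_of_ne' (hsupp k₀ hk₀T)
        set t := c k₀ / e k₀ with hts
        have ht : 0 < t := div_pos hck₀ hk₀pos
        set c' : κ → ℝ := fun k => if k ∈ T then c k - t * e k else 0 with hc'def
        have hc' : ∀ k, 0 ≤ c' k := by
          intro k
          rw [hc'def]
          dsimp only
          split
          · rename_i hkT
            rcases le_or_gt (e k) 0 with h | h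
            · have : 0 ≤ -(t * e k) := by nlinarith
              linarith [hc k]
            · have hmin := hk₀min k (Finset.mem_filter.2 ⟨hkT, h⟩)
              rw [sub_nonneg]
              calc t * e k ≤ c k / e k * e k := by
                    apply mul_le_mul_of_nonneg_right _ h.le
                    exact hmin
                _ = c k := div_mul_cancel₀ _ h.ne'
          · exact le_refl 0
        have hc'k₀ : c' k₀ = 0 := by
          rw [hc'def]; simp only [hk₀T, if_pos]
          rw [hts, div_mul_cancel₀ _ hk₀pos.ne', sub_self]
        have hsum' : ∑ k ∈ T, c' k • g k = ∑ k ∈ T, c k • g k := by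
          have : ∀ k ∈ T, c' k • g k = c k • g k - t • (e k • g k) := by
            intro k hk
            rw [hc'def]; simp only [hk, if_pos]
            rw [sub_smul, smul_smul]
          rw [Finset.sum_congr rfl this, Finset.sum_sub_distrib, ← Finset.smul_sum, hesum,
            smul_zero, sub_zero]
        set T' := T.filter (fun k => c' k ≠ 0) with hT'
        have hT'ss : T' ⊂ T := by
          refine Finset.ssubset_iff_of_subset (Finset.filter_subset _ _) |>.2
            ⟨k₀, hk₀T, by simp [hT', hc'k₀]⟩
        have hsum'' : ∑ k ∈ T', c' k • g k = ∑ k ∈ T, c' k • g k := by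
          refine Finset.sum_subset (Finset.filter_subset _ _) ?_
          intro k hk hk'
          have : c' k = 0 := by
            by_contra h
            exact hk' (Finset.mem_filter.2 ⟨hk, h⟩)
          simp [this]
        obtain ⟨S, hS, hmem⟩ := ih T' hT'ss c' hc'
        rw [hsum'', hsum'] at hmem
        exact ⟨S, hS, hmem⟩
    · push_neg at hsupp
      set T₀ := T.filter (fun k => c k ≠ 0) with hT₀
      have hss : T₀ ⊂ T := by
        obtain ⟨k, hkT, hk⟩ := hsupp
        exact Finset.ssubset_iff_of_subset (Finset.filter_subset _ _) |>.2
          ⟨k, hkT, by simp [hT₀, hk]⟩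
      have hsum : ∑ k ∈ T₀, c k • g k = ∑ k ∈ T, c k • g k := by
        refine Finset.sum_subset (Finset.filter_subset _ _) ?_
        intro k hk hk'
        have : c k = 0 := by
          by_contra h
          exact hk' (Finset.mem_filter.2 ⟨hk, h⟩)
        simp [this]
      obtain ⟨S, hS, hmem⟩ := ih T₀ hss c hc
      rw [hsum] at hmem
      exact ⟨S, hS, hmem⟩

lemma coneGenOn_isClosed_of_linearIndependent {g : κ → ι → ℝ} {S : Finset κ}
    (hS : LinearIndependent ℝ (fun k : S => g k)) : IsClosed (coneGenOn g S) := by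
  classical
  set L : (S → ℝ) →ₗ[ℝ] (ι → ℝ) :=
    { toFun := fun c => ∑ k : S, c k • g k
      map_add' := by
        intro a b
        rw [← Finset.sum_add_distrib]
        exact Finset.sum_congr rfl fun k _ => add_smul _ _ _
      map_smul' := by
        intro m a
        rw [RingHom.id_apply, Finset.smul_sum]
        exact Finset.sum_congr rfl fun k _ => (smul_smul m (a k) (g k)).symm } with hL
  have hker : LinearMap.ker L = ⊥ := by
    rw [LinearMap.ker_eq_bot']
    intro m hm
    funext k
    exact Fintype.linearIndependent_iff.1 hS m hm k
  have hemb := LinearMap.isClosedEmbedding_of_injective hker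
  have himg : coneGenOn g S = L '' {c : S → ℝ | ∀ k, 0 ≤ c k} := by
    ext x
    constructor
    · rintro ⟨c, hc, rfl⟩
      refine ⟨fun k => c k, fun k => hc k, ?_⟩
      simp only [hL, LinearMap.coe_mk, AddHom.coe_mk]
      exact Finset.sum_coe_sort S (fun k => c k • g k)
    · rintro ⟨c, hc, rfl⟩
      refine ⟨fun k => if h : k ∈ S then c ⟨k, h⟩ else 0, fun k => by dsimp only; split; exacts [hc _, le_rfl], ?_⟩
      simp only [hL, LinearMap.coe_mk, AddHom.coe_mk]
      rw [← Finset.sum_coe_sort S]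
      exact Finset.sum_congr rfl fun k _ => by simp [k.2]
  rw [himg]
  refine hemb.isClosedMap _ ?_
  have : {c : S → ℝ | ∀ k, 0 ≤ c k} = ⋂ k, {c : S → ℝ | 0 ≤ c k} := by
    ext; simp [Set.mem_iInter]
  rw [this]
  exact isClosed_iInter fun k => isClosed_le continuous_const (continuous_apply k)

lemma coneGen_isClosed (g : κ → ι → ℝ) : IsClosed (coneGen g) := by
  classical
  have : coneGen g = ⋃ S ∈ {S : Finset κ | LinearIndependent ℝ (fun k : S => g k)},
      coneGenOn g S := by
    ext x
    constructor
    · rintro ⟨c, hc, rfl⟩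
      obtain ⟨S, hS, hmem⟩ := coneGen_reduce g Finset.univ c hc
      exact Set.mem_biUnion hS hmem
    · intro hx
      obtain ⟨S, _, hmem⟩ := Set.mem_iUnion₂.1 hx
      exact coneGenOn_subset_coneGen hmem
  rw [this]
  exact Set.Finite.isClosed_biUnion (Set.toFinite _)
    fun S hS => coneGenOn_isClosed_of_linearIndependent hS

lemma coneGen_separation {g : κ → ι → ℝ} {e : ι → ℝ} (he : e ∉ coneGen g) :
    ∃ f : (ι → ℝ) →L[ℝ] ℝ, (∀ k, f (g k) ≤ 0) ∧ 0 < f e := by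
  obtain ⟨f, s, hfs, hse⟩ :=
    geometric_hahn_banach_closed_point (coneGen_convex g) (coneGen_isClosed g) he
  have hs0 : 0 < s := by simpa using hfs 0 (zero_mem_coneGen g)
  refine ⟨f, fun k => ?_, lt_trans hs0 hse⟩
  by_contra h
  push_neg at h
  have hmem : (s / f (g k)) • g k ∈ coneGen g :=
    coneGen_smul (le_of_lt (div_pos hs0 h)) (mem_coneGen g k)
  have := hfs _ hmem
  rw [map_smul, smul_eq_mul, div_mul_cancel₀ _ h.ne'] at this
  exact lt_irrefl s this

end Cone

def isPM {n : ℕ} (x : Fin n → Fin n → ℝ) : Prop :=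
  (∀ i j, 0 ≤ x i j) ∧ (∀ i, ∑ j, x i j = 1) ∧ (∀ j, ∑ i, x i j = 1)

def util {n : ℕ} (u x : Fin n → Fin n → ℝ) (i : Fin n) : ℝ := ∑ j, u i j * x i j

def ParetoOptimal {n : ℕ} (u x : Fin n → Fin n → ℝ) : Prop :=
  ¬ ∃ y, isPM y ∧ (∀ i, util u x i ≤ util u y i) ∧ (∃ i, util u x i < util u y i)

section Scal
variable {n : ℕ}

lemma permMatrix_apply (σ : Equiv.Perm (Fin n)) (i j : Fin n) :
    (σ.permMatrix ℝ) i j = if j = σ i then 1 else 0 := by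
  simp [Equiv.Perm.permMatrix, PEquiv.toMatrix, Equiv.toPEquiv, Option.mem_def, eq_comm]

lemma util_permMatrix (u : Fin n → Fin n → ℝ) (σ : Equiv.Perm (Fin n)) (i : Fin n) :
    ∑ j, u i j * (σ.permMatrix ℝ) i j = u i (σ i) := by
  rw [Finset.sum_eq_single (σ i)]
  · rw [permMatrix_apply]; simp
  · intro b _ hb; rw [permMatrix_apply]; simp [hb]
  · simp

lemma single_eq_fun (i : Fin n) : (Pi.single i 1 : Fin n → ℝ) = fun j => if i = j then 1 else 0 := by
  funext j
  rw [Pi.single_apply]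
  simp [eq_comm]

lemma pm_decomp (u : Fin n → Fin n → ℝ) {y : Fin n → Fin n → ℝ} (hy : isPM y) :
    ∃ w : Equiv.Perm (Fin n) → ℝ, (∀ σ, 0 ≤ w σ) ∧ ∑ σ, w σ = 1 ∧
      ∀ i, util u y i = ∑ σ, w σ * u i (σ i) := by
  have hds : (Matrix.of y) ∈ doublyStochastic ℝ (Fin n) :=
    mem_doublyStochastic_iff_sum.2 ⟨hy.1, hy.2.1, hy.2.2⟩
  obtain ⟨w, hw0, hw1, hw2⟩ := exists_eq_sum_perm_of_mem_doublyStochastic hds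
  refine ⟨w, hw0, hw1, fun i => ?_⟩
  have hyentry : ∀ i j, y i j = ∑ σ, w σ * (σ.permMatrix ℝ) i j := by
    intro i j
    have := congrFun (congrFun hw2 i) j
    simpa [Matrix.sum_apply] using this.symm
  unfold util
  calc ∑ j, u i j * y i j = ∑ j, ∑ σ, w σ * (u i j * (σ.permMatrix ℝ) i j) := by
        refine Finset.sum_congr rfl fun j _ => ?_
        rw [hyentry i j, Finset.mul_sum]
        exact Finset.sum_congr rfl fun σ _ => by ring
    _ = ∑ σ, w σ * ∑ j, u i j * (σ.permMatrix ℝ) i j := by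
        rw [Finset.sum_comm]
        exact Finset.sum_congr rfl fun σ _ => by rw [Finset.mul_sum]
    _ = ∑ σ, w σ * u i (σ i) :=
        Finset.sum_congr rfl fun σ _ => by rw [util_permMatrix]

lemma exists_alpha (u x₀ : Fin n → Fin n → ℝ) (h0 : isPM x₀) (hpo : ParetoOptimal u x₀) :
    ∃ α : Fin n → ℝ, (∀ i, 0 < α i) ∧
      ∀ y, isPM y → ∑ i, α i * util u y i ≤ ∑ i, α i * util u x₀ i := by
  classical
  set g : (Equiv.Perm (Fin n) ⊕ Fin n) → (Fin n → ℝ) :=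
    Sum.elim (fun σ i => u i (σ i) - util u x₀ i) (fun j => -Pi.single j 1) with hg
  have hnotmem : ∀ i₀ : Fin n, (Pi.single i₀ 1 : Fin n → ℝ) ∉ coneGen g := by
    intro i₀ hmem
    obtain ⟨c, hc, heq⟩ := hmem
    have heval : ∀ i : Fin n, (if i = i₀ then (1:ℝ) else 0) =
        (∑ σ, c (Sum.inl σ) * (u i (σ i) - util u x₀ i)) - c (Sum.inr i) := by
      intro i
      have h1 := congrFun heq i
      rw [Pi.single_apply] at h1
      rw [h1, Fintype.sum_sum_type]
      simp only [Finset.sum_apply, Pi.add_apply]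
      have hA : ∑ σ : Equiv.Perm (Fin n), (c (Sum.inl σ) • g (Sum.inl σ)) i
          = ∑ σ : Equiv.Perm (Fin n), c (Sum.inl σ) * (u i (σ i) - util u x₀ i) :=
        Finset.sum_congr rfl fun σ _ => by simp [hg]
      have hB : ∑ j : Fin n, (c (Sum.inr j) • g (Sum.inr j)) i = -c (Sum.inr i) := by
        rw [Finset.sum_eq_single i]
        · simp [hg, Pi.smul_apply, smul_eq_mul, Pi.neg_apply, Pi.single_apply]
        · intro b _ hb
          simp [hg, Pi.smul_apply, smul_eq_mul, Pi.neg_apply, Pi.single_apply, Ne.symm hb]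
        · simp
      rw [hA, hB]
      ring
    set s := ∑ σ, c (Sum.inl σ) with hs
    have hs0 : 0 ≤ s := Finset.sum_nonneg fun σ _ => hc _
    rcases hs0.eq_or_lt with hseq | hslt
    · have hzero : ∀ σ, c (Sum.inl σ) = 0 := by
        intro σ
        have := (Finset.sum_eq_zero_iff_of_nonneg (fun σ _ => hc (Sum.inl σ))).1 hseq.symm
        exact this σ (Finset.mem_univ σ)
      have h1 := heval i₀
      rw [if_pos rfl] at h1
      simp only [hzero, zero_mul, Finset.sum_const_zero, zero_sub] at h1
      have h2 := hc (Sum.inr i₀)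
      linarith
    · -- build the dominating matching y
      set y : Fin n → Fin n → ℝ :=
        fun a b => ∑ σ, (c (Sum.inl σ) / s) * (σ.permMatrix ℝ) a b with hy
      have hPentry : ∀ (σ : Equiv.Perm (Fin n)) a b, (0:ℝ) ≤ (σ.permMatrix ℝ) a b := by
        intro σ a b; rw [permMatrix_apply]; split <;> norm_num
    -- row and column sums of permutation matrices
      have hProw : ∀ (σ : Equiv.Perm (Fin n)) a, ∑ b, (σ.permMatrix ℝ) a b = 1 := by
        intro σ a
        rw [Finset.sum_eq_single (σ a)]
        · rw [permMatrix_apply]; simp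
        · intro b _ hb; rw [permMatrix_apply]; simp [hb]
        · simp
      have hPcol : ∀ (σ : Equiv.Perm (Fin n)) b, ∑ a, (σ.permMatrix ℝ) a b = 1 := by
        intro σ b
        rw [Finset.sum_eq_single (σ.symm b)]
        · rw [permMatrix_apply]; simp
        · intro a _ ha
          rw [permMatrix_apply, if_neg]
          intro hba
          exact ha (by rw [hba]; simp)
        · simp
      have hcs : ∑ σ, c (Sum.inl σ) / s = 1 := by
        rw [← Finset.sum_div, ← hs, div_self hslt.ne']
      have hyPM : isPM y := by
        refine ⟨fun a b => Finset.sum_nonneg fun σ _ =>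
          mul_nonneg (div_nonneg (hc _) hs0) (hPentry σ a b), fun a => ?_, fun b => ?_⟩
        · rw [Finset.sum_comm]
          calc ∑ σ, ∑ b, (c (Sum.inl σ) / s) * (σ.permMatrix ℝ) a b
              = ∑ σ, c (Sum.inl σ) / s := by
                refine Finset.sum_congr rfl fun σ _ => ?_
                rw [← Finset.mul_sum, hProw, mul_one]
            _ = 1 := hcs
        · rw [Finset.sum_comm]
          calc ∑ σ, ∑ a, (c (Sum.inl σ) / s) * (σ.permMatrix ℝ) a b
              = ∑ σ, c (Sum.inl σ) / s := by
                refine Finset.sum_congr rfl fun σ _ => ?_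
                rw [← Finset.mul_sum, hPcol, mul_one]
            _ = 1 := hcs
      have hutil : ∀ i, util u y i = ∑ σ, (c (Sum.inl σ) / s) * u i (σ i) := by
        intro i
        unfold util
        calc ∑ j, u i j * y i j
            = ∑ j, ∑ σ, (c (Sum.inl σ) / s) * (u i j * (σ.permMatrix ℝ) i j) := by
              refine Finset.sum_congr rfl fun j _ => ?_
              rw [hy, Finset.mul_sum]
              exact Finset.sum_congr rfl fun σ _ => by ring
          _ = ∑ σ, (c (Sum.inl σ) / s) * ∑ j, u i j * (σ.permMatrix ℝ) i j := by
              rw [Finset.sum_comm]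
              exact Finset.sum_congr rfl fun σ _ => by rw [Finset.mul_sum]
          _ = ∑ σ, (c (Sum.inl σ) / s) * u i (σ i) :=
              Finset.sum_congr rfl fun σ _ => by rw [util_permMatrix]
      have hdom : ∀ i, util u y i = util u x₀ i +
          (c (Sum.inr i) + (if i = i₀ then (1:ℝ) else 0)) / s := by
        intro i
        have he := heval i
        have hsum : ∑ σ, c (Sum.inl σ) * u i (σ i)
            = s * util u x₀ i + c (Sum.inr i) + (if i = i₀ then (1:ℝ) else 0) := by
          have : ∑ σ, c (Sum.inl σ) * (u i (σ i) - util u x₀ i)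
              = ∑ σ, c (Sum.inl σ) * u i (σ i) - s * util u x₀ i := by
            have hms : ∀ σ ∈ Finset.univ, c (Sum.inl σ) * (u i (σ i) - util u x₀ i)
                = c (Sum.inl σ) * u i (σ i) - c (Sum.inl σ) * util u x₀ i :=
              fun σ _ => mul_sub _ _ _
            rw [Finset.sum_congr rfl hms, Finset.sum_sub_distrib, ← Finset.sum_mul, ← hs]
          rw [this] at he
          linarith
        rw [hutil]
        have : ∑ σ, c (Sum.inl σ) / s * u i (σ i)
            = (∑ σ, c (Sum.inl σ) * u i (σ i)) / s := by
          rw [Finset.sum_div]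
          exact Finset.sum_congr rfl fun σ _ => by ring
        rw [this, hsum]
        field_simp
        ring
      refine hpo ⟨y, hyPM, fun i => ?_, ⟨i₀, ?_⟩⟩
      · rw [hdom i]
        have : 0 ≤ (c (Sum.inr i) + (if i = i₀ then (1:ℝ) else 0)) / s := by
          apply div_nonneg _ hs0
          have := hc (Sum.inr i)
          split <;> linarith
        linarith
      · rw [hdom i₀, if_pos rfl]
        have : 0 < (c (Sum.inr i₀) + 1) / s := by
          apply div_pos _ hslt
          have := hc (Sum.inr i₀)
          linarith
        linarith
  choose f hf1 hf2 using fun i₀ => coneGen_separation (hnotmem i₀)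
  set α : Fin n → ℝ := fun j => ∑ i₀, f i₀ (Pi.single j 1) with hα
  have hfnonneg : ∀ i₀ j, 0 ≤ f i₀ (Pi.single j 1) := by
    intro i₀ j
    have := hf1 i₀ (Sum.inr j)
    simp only [hg, Sum.elim_inr, map_neg] at this
    linarith
  have hαpos : ∀ j, 0 < α j := by
    intro j
    exact Finset.sum_pos' (fun i _ => hfnonneg i j) ⟨j, Finset.mem_univ j, hf2 j⟩
  refine ⟨α, hαpos, fun y hy => ?_⟩
  obtain ⟨w, hw0, hw1, hw2⟩ := pm_decomp u hy
  set wv : Fin n → ℝ := fun i => util u y i - util u x₀ i with hwv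
  have hwveq : wv = ∑ σ, w σ • g (Sum.inl σ) := by
    funext i
    rw [hwv]
    simp only [Finset.sum_apply, Pi.smul_apply, smul_eq_mul, hg, Sum.elim_inl]
    rw [hw2 i]
    have : ∑ σ, w σ * (u i (σ i) - util u x₀ i)
        = ∑ σ, w σ * u i (σ i) - (∑ σ, w σ) * util u x₀ i := by
      have hms : ∀ σ ∈ Finset.univ, w σ * (u i (σ i) - util u x₀ i)
          = w σ * u i (σ i) - w σ * util u x₀ i := fun σ _ => mul_sub _ _ _
      rw [Finset.sum_congr rfl hms, Finset.sum_sub_distrib, ← Finset.sum_mul]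
    rw [this, hw1, one_mul]
  have hfwv : ∀ i₀, f i₀ wv ≤ 0 := by
    intro i₀
    rw [hwveq, map_sum]
    refine Finset.sum_nonpos fun σ _ => ?_
    rw [map_smul, smul_eq_mul]
    exact mul_nonpos_of_nonneg_of_nonpos (hw0 σ) (hf1 i₀ (Sum.inl σ))
  have hrepr : ∀ (v : Fin n → ℝ) i₀, f i₀ v = ∑ j, v j * f i₀ (Pi.single j 1) := by
    intro v i₀
    conv_lhs => rw [pi_eq_sum_univ v]
    rw [map_sum]
    refine Finset.sum_congr rfl fun j _ => ?_
    rw [← single_eq_fun, map_smul, smul_eq_mul]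
  have key : ∑ j, α j * wv j ≤ 0 := by
    calc ∑ j, α j * wv j = ∑ j, ∑ i₀, wv j * f i₀ (Pi.single j 1) := by
          refine Finset.sum_congr rfl fun j _ => ?_
          rw [hα]
          dsimp only
          rw [Finset.sum_mul]
          exact Finset.sum_congr rfl fun i₀ _ => by ring
      _ = ∑ i₀, ∑ j, wv j * f i₀ (Pi.single j 1) := Finset.sum_comm
      _ = ∑ i₀, f i₀ wv := Finset.sum_congr rfl fun i₀ _ => (hrepr wv i₀).symm
      _ ≤ 0 := Finset.sum_nonpos fun i₀ _ => hfwv i₀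
  have : ∑ j, α j * wv j = ∑ i, α i * util u y i - ∑ i, α i * util u x₀ i := by
    rw [← Finset.sum_sub_distrib]
    exact Finset.sum_congr rfl fun i _ => by rw [hwv]; ring
  linarith [this ▸ key]

end Scal

/-- Envy-freeness: no agent prefers another agent's bundle. -/
def EnvyFree {n : ℕ} (u x : Fin n → Fin n → ℝ) : Prop :=
  ∀ i i' : Fin n, ∑ j, u i j * x i' j ≤ ∑ j, u i j * x i j

/-- The envy-free polytope `P_EF` of envy-free fractional perfect matchings. -/
def PEF {n : ℕ} (u : Fin n → Fin n → ℝ) : Set (Fin n → Fin n → ℝ) :=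
  {x | isPM x ∧ EnvyFree u x}

section Face
variable {n : ℕ}

lemma combo_apply (x y : Fin n → Fin n → ℝ) (a b : ℝ) (i j : Fin n) :
    (a • x + b • y) i j = a * x i j + b * y i j := rfl

lemma pef_convex (u : Fin n → Fin n → ℝ) : Convex ℝ (PEF u) := by
  rintro x ⟨⟨hx0, hxr, hxc⟩, hxe⟩ y ⟨⟨hy0, hyr, hyc⟩, hye⟩ a b ha hb hab
  have hexp : ∀ k i : Fin n, ∑ j, u i j * (a • x + b • y) k j
      = a * ∑ j, u i j * x k j + b * ∑ j, u i j * y k j := by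
    intro k i
    rw [Finset.mul_sum, Finset.mul_sum, ← Finset.sum_add_distrib]
    exact Finset.sum_congr rfl fun j _ => by rw [combo_apply]; ring
  refine ⟨⟨fun i j => ?_, fun i => ?_, fun j => ?_⟩, fun i i' => ?_⟩
  · rw [combo_apply]
    exact add_nonneg (mul_nonneg ha (hx0 i j)) (mul_nonneg hb (hy0 i j))
  · simp only [combo_apply]
    rw [Finset.sum_add_distrib, ← Finset.mul_sum, ← Finset.mul_sum, hxr, hyr]
    linarith
  · simp only [combo_apply]
    rw [Finset.sum_add_distrib, ← Finset.mul_sum, ← Finset.mul_sum, hxc, hyc]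
    linarith
  · rw [hexp i' i, hexp i i]
    exact add_le_add (mul_le_mul_of_nonneg_left (hxe i i') ha)
      (mul_le_mul_of_nonneg_left (hye i i') hb)

lemma pef_isClosed (u : Fin n → Fin n → ℝ) : IsClosed (PEF u) := by
  have hct : ∀ i j : Fin n, Continuous fun x : Fin n → Fin n → ℝ => x i j :=
    fun i j => (continuous_apply j).comp (continuous_apply i)
  have h1 : IsClosed {x : Fin n → Fin n → ℝ | ∀ i j, 0 ≤ x i j} := by
    have : {x : Fin n → Fin n → ℝ | ∀ i j, 0 ≤ x i j}
        = ⋂ i, ⋂ j, {x : Fin n → Fin n → ℝ | 0 ≤ x i j} := by ext; simp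
    rw [this]
    exact isClosed_iInter fun i => isClosed_iInter fun j =>
      isClosed_le continuous_const (hct i j)
  have h2 : IsClosed {x : Fin n → Fin n → ℝ | ∀ i, ∑ j, x i j = 1} := by
    have : {x : Fin n → Fin n → ℝ | ∀ i, ∑ j, x i j = 1}
        = ⋂ i, {x : Fin n → Fin n → ℝ | ∑ j, x i j = 1} := by ext; simp
    rw [this]
    exact isClosed_iInter fun i =>
      isClosed_eq (continuous_finset_sum _ fun j _ => hct i j) continuous_const
  have h3 : IsClosed {x : Fin n → Fin n → ℝ | ∀ j, ∑ i, x i j = 1} := by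
    have : {x : Fin n → Fin n → ℝ | ∀ j, ∑ i, x i j = 1}
        = ⋂ j, {x : Fin n → Fin n → ℝ | ∑ i, x i j = 1} := by ext; simp
    rw [this]
    exact isClosed_iInter fun j =>
      isClosed_eq (continuous_finset_sum _ fun i _ => hct i j) continuous_const
  have h4 : IsClosed {x : Fin n → Fin n → ℝ | EnvyFree u x} := by
    have : {x : Fin n → Fin n → ℝ | EnvyFree u x}
        = ⋂ i, ⋂ i', {x : Fin n → Fin n → ℝ | ∑ j, u i j * x i' j ≤ ∑ j, u i j * x i j} := by
      ext; simp [EnvyFree]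
    rw [this]
    exact isClosed_iInter fun i => isClosed_iInter fun i' =>
      isClosed_le (continuous_finset_sum _ fun j _ => continuous_const.mul (hct i' j))
        (continuous_finset_sum _ fun j _ => continuous_const.mul (hct i j))
  have : PEF u = ({x : Fin n → Fin n → ℝ | ∀ i j, 0 ≤ x i j}
      ∩ {x | ∀ i, ∑ j, x i j = 1} ∩ {x | ∀ j, ∑ i, x i j = 1})
      ∩ {x | EnvyFree u x} := by
    ext x
    simp only [PEF, isPM, Set.mem_setOf_eq, Set.mem_inter_iff]
    tauto
  rw [this]
  exact ((h1.inter h2).inter h3).inter h4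

lemma pef_isCompact (u : Fin n → Fin n → ℝ) : IsCompact (PEF u) := by
  have hK : IsCompact (Set.pi Set.univ fun _ : Fin n =>
      Set.pi Set.univ fun _ : Fin n => Set.Icc (0:ℝ) 1) :=
    isCompact_univ_pi fun _ => isCompact_univ_pi fun _ => isCompact_Icc
  refine hK.of_isClosed_subset (pef_isClosed u) ?_
  rintro x ⟨⟨hx0, hxr, _⟩, _⟩
  intro i _
  intro j _
  refine ⟨hx0 i j, ?_⟩
  calc x i j ≤ ∑ k, x i k := Finset.single_le_sum (fun k _ => hx0 i k) (Finset.mem_univ j)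
    _ = 1 := hxr i

lemma exists_extreme_efpo (u : Fin n → Fin n → ℝ)
    (hex : ∃ x, isPM x ∧ EnvyFree u x ∧ ParetoOptimal u x) :
    ∃ x, x ∈ Set.extremePoints ℝ (PEF u) ∧ isPM x ∧ EnvyFree u x ∧ ParetoOptimal u x := by
  classical
  obtain ⟨x₀, h0PM, h0EF, h0PO⟩ := hex
  obtain ⟨α, hαpos, hαmax⟩ := exists_alpha u x₀ h0PM h0PO
  set φ : (Fin n → Fin n → ℝ) → ℝ := fun x => ∑ i, α i * util u x i with hφ
  have hφcont : Continuous φ := by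
    apply continuous_finset_sum
    intro i _
    exact continuous_const.mul (continuous_finset_sum _ fun j _ =>
      continuous_const.mul ((continuous_apply j).comp (continuous_apply i)))
  have hφcombo : ∀ (x y : Fin n → Fin n → ℝ) (a b : ℝ),
      φ (a • x + b • y) = a * φ x + b * φ y := by
    intro x y a b
    rw [hφ]
    simp only
    rw [Finset.mul_sum, Finset.mul_sum, ← Finset.sum_add_distrib]
    refine Finset.sum_congr rfl fun i _ => ?_
    have : util u (a • x + b • y) i = a * util u x i + b * util u y i := by
      unfold util
      rw [Finset.mul_sum, Finset.mul_sum, ← Finset.sum_add_distrib]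
      exact Finset.sum_congr rfl fun j _ => by rw [combo_apply]; ring
    rw [this]
    ring
  have hPEFne : (PEF u).Nonempty := ⟨x₀, h0PM, h0EF⟩
  obtain ⟨z, hzPEF, hzmax⟩ :=
    (pef_isCompact u).exists_isMaxOn hPEFne hφcont.continuousOn
  set F := {x ∈ PEF u | φ x = φ z} with hF
  have hFne : F.Nonempty := ⟨z, hzPEF, rfl⟩
  have hFclosed : IsClosed F := by
    have : F = PEF u ∩ {x | φ x = φ z} := rfl
    rw [this]
    exact (pef_isClosed u).inter (isClosed_eq hφcont continuous_const)
  have hFcomp : IsCompact F :=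
    (pef_isCompact u).of_isClosed_subset hFclosed fun x hx => hx.1
  have hFconv : Convex ℝ F := by
    rintro x ⟨hx, hφx⟩ y ⟨hy, hφy⟩ a b ha hb hab
    refine ⟨pef_convex u hx hy ha hb hab, ?_⟩
    show φ (a • x + b • y) = φ z
    rw [hφcombo x y a b, hφx, hφy, ← add_mul, hab, one_mul]
  obtain ⟨xs, hxs⟩ := hFcomp.extremePoints_nonempty hFne
  rw [mem_extremePoints] at hxs
  obtain ⟨⟨hxsPEF, hxsφ⟩, hxsext⟩ := hxs
  -- xs is an extreme point of PEF u
  have hxsExtreme : xs ∈ Set.extremePoints ℝ (PEF u) := by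
    rw [mem_extremePoints]
    refine ⟨hxsPEF, fun x₁ h₁ x₂ h₂ hseg => ?_⟩
    obtain ⟨a, b, ha, hb, hab, hsum⟩ := hseg
    have hφ1 : φ x₁ ≤ φ z := hzmax h₁
    have hφ2 : φ x₂ ≤ φ z := hzmax h₂
    have hcombo : a * φ x₁ + b * φ x₂ = φ z := by
      rw [← hφcombo, hsum, hxsφ]
    have hexp : a * φ z + b * φ z = φ z := by rw [← add_mul, hab, one_mul]
    have hb' : b * φ x₂ ≤ b * φ z := mul_le_mul_of_nonneg_left hφ2 hb.le
    have ha' : a * φ x₁ ≤ a * φ z := mul_le_mul_of_nonneg_left hφ1 ha.le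
    have hφ1' : φ x₁ = φ z := by
      refine le_antisymm hφ1 (le_of_mul_le_mul_left ?_ ha)
      linarith
    have hφ2' : φ x₂ = φ z := by
      refine le_antisymm hφ2 (le_of_mul_le_mul_left ?_ hb)
      linarith
    exact hxsext x₁ ⟨h₁, hφ1'⟩ x₂ ⟨h₂, hφ2'⟩ ⟨a, b, ha, hb, hab, hsum⟩
  -- xs is Pareto optimal
  have hxsPO : ParetoOptimal u xs := by
    rintro ⟨y, hyPM, hyle, i, hylt⟩
    have h1 : φ xs < ∑ i, α i * util u y i := by
      apply Finset.sum_lt_sum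
      · exact fun k _ => mul_le_mul_of_nonneg_left (hyle k) (hαpos k).le
      · exact ⟨i, Finset.mem_univ i, mul_lt_mul_of_pos_left hylt (hαpos i)⟩
    have h2 : ∑ i, α i * util u y i ≤ ∑ i, α i * util u x₀ i := hαmax y hyPM
    have h3 : ∑ i, α i * util u x₀ i ≤ φ z := hzmax ⟨h0PM, h0EF⟩
    rw [hxsφ] at h1
    simp only [hφ] at h1 h2 h3
    linarith
  exact ⟨xs, hxsExtreme, hxsPEF.1, hxsPEF.2, hxsPO⟩

end Face

section Rational
variable {n : ℕ}

/-- Index type for the linear constraints defining `PEF`. -/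
abbrev ConIx (n : ℕ) := (Fin n × Fin n) ⊕ ((Bool × (Fin n ⊕ Fin n)) ⊕ (Fin n × Fin n))

/-- Coefficient vectors (over `ℚ`) of the constraints. -/
def conA (u : Fin n → Fin n → ℚ) : ConIx n → (Fin n × Fin n) → ℚ
  | Sum.inl p => fun p' => if p' = p then 1 else 0
  | Sum.inr (Sum.inl (s, Sum.inl i)) => fun p' => (if s then 1 else -1) * (if p'.1 = i then 1 else 0)
  | Sum.inr (Sum.inl (s, Sum.inr j)) => fun p' => (if s then 1 else -1) * (if p'.2 = j then 1 else 0)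
  | Sum.inr (Sum.inr q) => fun p' =>
      (if p'.1 = q.1 then u q.1 p'.2 else 0) - (if p'.1 = q.2 then u q.1 p'.2 else 0)

/-- Right-hand sides of the constraints. -/
def conB : ConIx n → ℚ
  | Sum.inl _ => 0
  | Sum.inr (Sum.inl (s, _)) => if s then 1 else -1
  | Sum.inr (Sum.inr _) => 0

/-- Real dot product of constraint `c` with an allocation `x`. -/
def dotR (u : Fin n → Fin n → ℚ) (c : ConIx n) (x : Fin n → Fin n → ℝ) : ℝ :=
  ∑ p : Fin n × Fin n, (conA u c p : ℝ) * x p.1 p.2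

lemma dot_pos (u : Fin n → Fin n → ℚ) (p : Fin n × Fin n) (x : Fin n → Fin n → ℝ) :
    dotR u (Sum.inl p) x = x p.1 p.2 := by
  simp only [dotR, conA]
  have : ∀ p' : Fin n × Fin n, (Rat.cast (if p' = p then (1:ℚ) else 0) : ℝ) * x p'.1 p'.2
      = if p' = p then x p'.1 p'.2 else 0 := by
    intro p'; split <;> simp
  rw [Finset.sum_congr rfl fun p' _ => this p', Finset.sum_ite_eq' Finset.univ p
    (fun p' => x p'.1 p'.2), if_pos (Finset.mem_univ p)]

lemma dot_row (u : Fin n → Fin n → ℚ) (s : Bool) (i : Fin n) (x : Fin n → Fin n → ℝ) :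
    dotR u (Sum.inr (Sum.inl (s, Sum.inl i))) x = (if s then 1 else -1) * ∑ j, x i j := by
  simp only [dotR, conA]
  have : ∀ p' : Fin n × Fin n,
      (Rat.cast ((if s then (1:ℚ) else -1) * (if p'.1 = i then 1 else 0)) : ℝ) * x p'.1 p'.2
      = (if s then (1:ℝ) else -1) * (if p'.1 = i then x p'.1 p'.2 else 0) := by
    intro p'
    push_cast
    rcases s with _ | _ <;> split <;> (split <;> simp)
  rw [Finset.sum_congr rfl fun p' _ => this p', ← Finset.mul_sum]
  congr 1
  rw [Fintype.sum_prod_type]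
  have h2 : ∀ i' : Fin n, ∑ j, (if i' = i then x i' j else 0)
      = if i' = i then ∑ j, x i' j else 0 := by
    intro i'; split <;> simp
  rw [Finset.sum_congr rfl fun i' _ => h2 i', Finset.sum_ite_eq' Finset.univ i
    (fun i' => ∑ j, x i' j), if_pos (Finset.mem_univ i)]

lemma dot_col (u : Fin n → Fin n → ℚ) (s : Bool) (j : Fin n) (x : Fin n → Fin n → ℝ) :
    dotR u (Sum.inr (Sum.inl (s, Sum.inr j))) x = (if s then 1 else -1) * ∑ i, x i j := by
  simp only [dotR, conA]
  have : ∀ p' : Fin n × Fin n,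
      (Rat.cast ((if s then (1:ℚ) else -1) * (if p'.2 = j then 1 else 0)) : ℝ) * x p'.1 p'.2
      = (if s then (1:ℝ) else -1) * (if p'.2 = j then x p'.1 p'.2 else 0) := by
    intro p'
    push_cast
    rcases s with _ | _ <;> split <;> (split <;> simp)
  rw [Finset.sum_congr rfl fun p' _ => this p', ← Finset.mul_sum]
  congr 1
  rw [Fintype.sum_prod_type_right]
  have h2 : ∀ j' : Fin n, ∑ i, (if j' = j then x i j' else 0)
      = if j' = j then ∑ i, x i j' else 0 := by
    intro j'; split <;> simp
  rw [Finset.sum_congr rfl fun j' _ => h2 j', Finset.sum_ite_eq' Finset.univ j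
    (fun j' => ∑ i, x i j'), if_pos (Finset.mem_univ j)]

lemma dot_ef (u : Fin n → Fin n → ℚ) (q : Fin n × Fin n) (x : Fin n → Fin n → ℝ) :
    dotR u (Sum.inr (Sum.inr q)) x
      = ∑ j, (u q.1 j : ℝ) * x q.1 j - ∑ j, (u q.1 j : ℝ) * x q.2 j := by
  simp only [dotR, conA]
  have : ∀ p' : Fin n × Fin n,
      (Rat.cast ((if p'.1 = q.1 then u q.1 p'.2 else 0) - (if p'.1 = q.2 then u q.1 p'.2 else 0)) : ℝ)
        * x p'.1 p'.2
      = (if p'.1 = q.1 then (u q.1 p'.2 : ℝ) * x p'.1 p'.2 else 0)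
        - (if p'.1 = q.2 then (u q.1 p'.2 : ℝ) * x p'.1 p'.2 else 0) := by
    intro p'
    push_cast
    rw [sub_mul]
    congr 1 <;> (split <;> simp)
  rw [Finset.sum_congr rfl fun p' _ => this p', Finset.sum_sub_distrib]
  congr 1
  · rw [Fintype.sum_prod_type]
    have h2 : ∀ i' : Fin n, ∑ j, (if i' = q.1 then (u q.1 j : ℝ) * x i' j else 0)
        = if i' = q.1 then ∑ j, (u q.1 j : ℝ) * x i' j else 0 := by
      intro i'; split <;> simp
    rw [Finset.sum_congr rfl fun i' _ => h2 i', Finset.sum_ite_eq' Finset.univ q.1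
      (fun i' => ∑ j, (u q.1 j : ℝ) * x i' j), if_pos (Finset.mem_univ q.1)]
  · rw [Fintype.sum_prod_type]
    have h2 : ∀ i' : Fin n, ∑ j, (if i' = q.2 then (u q.1 j : ℝ) * x i' j else 0)
        = if i' = q.2 then ∑ j, (u q.1 j : ℝ) * x i' j else 0 := by
      intro i'; split <;> simp
    rw [Finset.sum_congr rfl fun i' _ => h2 i', Finset.sum_ite_eq' Finset.univ q.2
      (fun i' => ∑ j, (u q.1 j : ℝ) * x i' j), if_pos (Finset.mem_univ q.2)]

lemma pef_iff_constraints (u : Fin n → Fin n → ℚ) (x : Fin n → Fin n → ℝ) :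
    x ∈ PEF (fun i j => (u i j : ℝ)) ↔ ∀ c, (conB c : ℝ) ≤ dotR u c x := by
  constructor
  · rintro ⟨⟨hx0, hxr, hxc⟩, hxe⟩ c
    match c with
    | Sum.inl p => rw [dot_pos]; simpa [conB] using hx0 p.1 p.2
    | Sum.inr (Sum.inl (s, Sum.inl i)) =>
      rw [dot_row, hxr i]
      rcases s with _ | _ <;> simp [conB]
    | Sum.inr (Sum.inl (s, Sum.inr j)) =>
      rw [dot_col, hxc j]
      rcases s with _ | _ <;> simp [conB]
    | Sum.inr (Sum.inr q) =>
      rw [dot_ef]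
      have := hxe q.1 q.2
      simpa [conB] using this
  · intro h
    refine ⟨⟨fun i j => ?_, fun i => ?_, fun j => ?_⟩, fun i i' => ?_⟩
    · have := h (Sum.inl (i, j))
      rw [dot_pos] at this
      simpa [conB] using this
    · have h1 := h (Sum.inr (Sum.inl (true, Sum.inl i)))
      have h2 := h (Sum.inr (Sum.inl (false, Sum.inl i)))
      rw [dot_row] at h1 h2
      simp [conB] at h1 h2
      linarith
    · have h1 := h (Sum.inr (Sum.inl (true, Sum.inr j)))
      have h2 := h (Sum.inr (Sum.inl (false, Sum.inr j)))
      rw [dot_col] at h1 h2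
      simp [conB] at h1 h2
      linarith
    · have := h (Sum.inr (Sum.inr (i, i')))
      rw [dot_ef] at this
      simp [conB] at this
      linarith

lemma map_mulVec_cast {a b : Type*} [Fintype b] (M : Matrix a b ℚ) (v : b → ℚ) :
    (M.map (Rat.cast : ℚ → ℝ)).mulVec (fun p => (v p : ℝ))
      = fun t => ((M.mulVec v t : ℚ) : ℝ) := by
  funext t
  simp [Matrix.mulVec, dotProduct, Matrix.map_apply]

lemma extreme_rational (u : Fin n → Fin n → ℚ) (xs : Fin n → Fin n → ℝ)
    (hxs : xs ∈ Set.extremePoints ℝ (PEF (fun i j => (u i j : ℝ)))) :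
    ∀ i j, ∃ q : ℚ, xs i j = (q : ℝ) := by
  classical
  rw [mem_extremePoints] at hxs
  obtain ⟨hxsPEF, hxsext⟩ := hxs
  have hsat : ∀ c, (conB c : ℝ) ≤ dotR u c xs := (pef_iff_constraints u xs).1 hxsPEF
  set tight : ConIx n → Prop := fun c => dotR u c xs = (conB c : ℝ) with htight
  -- Step 1: the tight constraints pin down xs
  have hker : ∀ d : (Fin n × Fin n) → ℝ,
      (∀ c, tight c → ∑ p, (conA u c p : ℝ) * d p = 0) → d = 0 := by
    intro d hd
    by_contra hdne
    set dotd : ConIx n → ℝ := fun c => ∑ p, (conA u c p : ℝ) * d p with hdotd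
    set gap : ConIx n → ℝ := fun c => dotR u c xs - (conB c : ℝ) with hgap
    have hgap0 : ∀ c, 0 ≤ gap c := fun c => by rw [hgap]; simp; linarith [hsat c]
    have hgappos : ∀ c, ¬tight c → 0 < gap c := by
      intro c hc
      rcases (hgap0 c).eq_or_lt with h | h
      · exact absurd (by rw [htight]; simp only [hgap] at h; linarith) hc
      · exact h
    set εf : ConIx n → ℝ := fun c => if tight c then 1 else gap c / (|dotd c| + 1) with hεf
    have hεfpos : ∀ c, 0 < εf c := by
      intro c
      rw [hεf]
      dsimp only
      split
      · norm_num
      · rename_i hc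
        exact div_pos (hgappos c hc) (by positivity)
    set E := insert (1:ℝ) (Finset.univ.image εf) with hE
    have hEne : E.Nonempty := ⟨1, Finset.mem_insert_self _ _⟩
    set ε := E.min' hEne with hεdef
    have hεpos : 0 < ε := by
      have hmem := E.min'_mem hEne
      rw [← hεdef] at hmem
      rw [hE] at hmem
      rcases Finset.mem_insert.1 hmem with h | h
      · rw [h]; norm_num
      · obtain ⟨c, _, hc⟩ := Finset.mem_image.1 h
        rw [← hc]; exact hεfpos c
    have hεle : ∀ c, ε ≤ εf c := fun c =>
      Finset.min'_le _ _ (Finset.mem_insert_of_mem (Finset.mem_image_of_mem εf (Finset.mem_univ c)))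
    have hεbound : ∀ c, ¬tight c → ε * |dotd c| ≤ gap c := by
      intro c hc
      have h1 : ε * |dotd c| ≤ εf c * |dotd c| :=
        mul_le_mul_of_nonneg_right (hεle c) (abs_nonneg _)
      have h2 : εf c * |dotd c| ≤ gap c := by
        rw [hεf]
        dsimp only
        rw [if_neg hc]
        rw [div_mul_eq_mul_div, div_le_iff₀ (by positivity)]
        have := hgap0 c
        nlinarith [abs_nonneg (dotd c)]
      linarith
    -- the two perturbed points
    set y₁ : Fin n → Fin n → ℝ := fun i j => xs i j + ε * d (i, j) with hy₁
    set y₂ : Fin n → Fin n → ℝ := fun i j => xs i j - ε * d (i, j) with hy₂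
    have hdot₁ : ∀ c, dotR u c y₁ = dotR u c xs + ε * dotd c := by
      intro c
      rw [hy₁]
      unfold dotR
      rw [hdotd]
      dsimp only
      rw [Finset.mul_sum, ← Finset.sum_add_distrib]
      refine Finset.sum_congr rfl fun p _ => ?_
      rw [← Prod.mk.eta (p := p)]
      ring
    have hdot₂ : ∀ c, dotR u c y₂ = dotR u c xs - ε * dotd c := by
      intro c
      rw [hy₂]
      unfold dotR
      rw [hdotd]
      dsimp only
      rw [Finset.mul_sum, ← Finset.sum_sub_distrib]
      refine Finset.sum_congr rfl fun p _ => ?_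
      rw [← Prod.mk.eta (p := p)]
      ring
    have hmem₁ : y₁ ∈ PEF (fun i j => (u i j : ℝ)) := by
      rw [pef_iff_constraints]
      intro c
      rw [hdot₁ c]
      by_cases hc : tight c
      · have h0 : dotd c = 0 := hd c hc
        rw [h0, mul_zero, add_zero]
        exact hsat c
      · have := hεbound c hc
        have habs : -(ε * |dotd c|) ≤ ε * dotd c := by
          have h1 : -|dotd c| ≤ dotd c := neg_abs_le _
          nlinarith
        have hg := hgap0 c
        simp only [hgap] at this ⊢
        linarith [hsat c]
    have hmem₂ : y₂ ∈ PEF (fun i j => (u i j : ℝ)) := by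
      rw [pef_iff_constraints]
      intro c
      rw [hdot₂ c]
      by_cases hc : tight c
      · have h0 : dotd c = 0 := hd c hc
        rw [h0, mul_zero, sub_zero]
        exact hsat c
      · have := hεbound c hc
        have habs : ε * dotd c ≤ ε * |dotd c| := by
          have h1 : dotd c ≤ |dotd c| := le_abs_self _
          nlinarith
        simp only [hgap] at this
        linarith [hsat c]
    have hseg : xs ∈ openSegment ℝ y₁ y₂ := by
      refine ⟨1/2, 1/2, by norm_num, by norm_num, by norm_num, ?_⟩
      funext i j
      rw [combo_apply, hy₁, hy₂]
      ring
    have := hxsext y₁ hmem₁ y₂ hmem₂ hseg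
    apply hdne
    funext p
    have h1 := congrFun (congrFun this.1 p.1) p.2
    rw [hy₁] at h1
    simp only at h1
    have : ε * d (p.1, p.2) = 0 := by linarith
    have hd0 : d (p.1, p.2) = 0 := by
      rcases mul_eq_zero.1 this with h | h
      · exact absurd h hεpos.ne'
      · exact h
    rw [← Prod.mk.eta (p := p)]
    exact hd0
  -- Step 2: solve the tight system over ℚ
  letI : DecidablePred tight := Classical.decPred _
  set T := {c : ConIx n // tight c} with hT
  set A : Matrix T (Fin n × Fin n) ℚ := fun t p => conA u t.1 p with hA
  set AR := A.map (Rat.cast : ℚ → ℝ) with hAR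
  set xv : (Fin n × Fin n) → ℝ := fun p => xs p.1 p.2 with hxv
  set bR : T → ℝ := fun t => (conB t.1 : ℝ) with hbR
  have hAx : AR.mulVec xv = bR := by
    funext t
    have h2 : dotR u t.1 xs = (conB t.1 : ℝ) := t.2
    unfold dotR at h2
    simp only [Matrix.mulVec, dotProduct, hAR, hA, Matrix.map_apply, hxv, hbR]
    exact h2
  have hkerR : ∀ v : (Fin n × Fin n) → ℝ, AR.mulVec v = 0 → v = 0 := by
    intro v hv
    apply hker
    intro c hc
    have := congrFun hv ⟨c, hc⟩
    exact this
  set M := A.transpose * A with hM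
  set MR := M.map (Rat.cast : ℚ → ℝ) with hMR
  have hMReq : MR = AR.transpose * AR := by
    ext p p'
    simp only [hMR, hM, Matrix.map_apply, Matrix.mul_apply, Matrix.transpose_apply, hAR, hA]
    change ((∑ j : T, conA u j.1 p * conA u j.1 p' : ℚ) : ℝ) = ∑ j : T, (conA u j.1 p : ℝ) * (conA u j.1 p' : ℝ)
    rw [Rat.cast_sum]
    exact Finset.sum_congr rfl fun j _ => Rat.cast_mul _ _
  have hMker : ∀ v : (Fin n × Fin n) → ℝ, MR.mulVec v = 0 → v = 0 := by
    intro v hv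
    apply hkerR
    have h1 : dotProduct v (MR.mulVec v) = 0 := by rw [hv, dotProduct_zero]
    rw [hMReq, ← Matrix.mulVec_mulVec, Matrix.dotProduct_mulVec, Matrix.vecMul_transpose]
      at h1
    exact dotProduct_self_eq_zero.1 h1
  have hdet : M.det ≠ 0 := by
    intro h0
    obtain ⟨v, hvne, hv⟩ := Matrix.exists_mulVec_eq_zero_iff.2 h0
    apply hvne
    have : MR.mulVec (fun p => (v p : ℝ)) = 0 := by
      rw [hMR, map_mulVec_cast, hv]
      funext p
      simp
    have h4 := hMker _ this
    funext p
    have h3 := congrFun h4 p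
    rw [Pi.zero_apply] at h3
    rw [Pi.zero_apply]
    exact_mod_cast h3
  set q : (Fin n × Fin n) → ℚ := (M⁻¹ * A.transpose).mulVec (fun t => conB t.1) with hq
  have hMq : M.mulVec q = A.transpose.mulVec (fun t => conB t.1) := by
    conv_lhs => rw [hq, Matrix.mulVec_mulVec, ← Matrix.mul_assoc,
      Matrix.mul_nonsing_inv M (Ne.isUnit hdet), Matrix.one_mul]
  have hMxv : MR.mulVec xv = MR.mulVec (fun p => (q p : ℝ)) := by
    have hRHS : MR.mulVec (fun p => (q p : ℝ))
        = fun p => ((A.transpose.mulVec (fun t => conB t.1)) p : ℝ) := by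
      rw [hMR, map_mulVec_cast, hMq]
    have htr : (A.transpose).map (Rat.cast : ℚ → ℝ) = AR.transpose := by
      rw [hAR, Matrix.transpose_map]
    have hLHS : MR.mulVec xv
        = fun p => ((A.transpose.mulVec (fun t => conB t.1)) p : ℝ) := by
      rw [hMReq, ← Matrix.mulVec_mulVec, hAx, ← htr]
      have hb' : bR = fun t : T => ((conB t.1 : ℚ) : ℝ) := rfl
      rw [hb', map_mulVec_cast]
    rw [hLHS, hRHS]
  have hfinal : xv = fun p => (q p : ℝ) := by
    have h0 : MR.mulVec (xv - fun p => (q p : ℝ)) = 0 := by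
      rw [Matrix.mulVec_sub, hMxv, sub_self]
    have := hMker _ h0
    funext p
    have := congrFun this p
    simpa [sub_eq_zero] using this
  intro i j
  exact ⟨q (i, j), congrFun hfinal (i, j)⟩

end Rational

/-- if an envy-free Pareto-optimal fractional perfect matching exists,
then there is one which is a vertex (extreme point) of `P_EF`; in particular, with
rational utilities there is a rational envy-free Pareto-optimal allocation. -/
theorem efpo_rational {n : ℕ} (u : Fin n → Fin n → ℚ)
    (hu : ∀ i j, 0 ≤ u i j)
    (hex : ∃ x : Fin n → Fin n → ℝ,
      isPM x ∧ EnvyFree (fun i j => (u i j : ℝ)) x ∧ ParetoOptimal (fun i j => (u i j : ℝ)) x) :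
    ∃ x : Fin n → Fin n → ℝ,
      x ∈ Set.extremePoints ℝ (PEF (fun i j => (u i j : ℝ))) ∧
      isPM x ∧ EnvyFree (fun i j => (u i j : ℝ)) x ∧
      ParetoOptimal (fun i j => (u i j : ℝ)) x ∧
      ∀ i j, ∃ q : ℚ, x i j = (q : ℝ) := by
  obtain ⟨xs, hext, hPM, hEF, hPO⟩ := exists_extreme_efpo (fun i j => (u i j : ℝ)) hex
  exact ⟨xs, hext, hPM, hEF, hPO, extreme_rational u xs hext⟩
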